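/- Let G be a group with a left-order <. Let u, v, t ∈ G with ut = tu and vt = tv, and let m, n₁, n₂ be integers. If t^{m-1} < u < t^m and t^{n₁} < v < t^{n₂}, then t^{m-2} < v^{-1} u v < t^{m+1}. -/

import Mathlib

private lemma key_conj {G : Type*} [Group G] [LinearOrder G]
    [CovariantClass G G (· * ·) (· < ·)]
    (t x v : G) (ht : 1 < t) (hx : t < x) (hxt : Commute x t) (hvt : Commute v t)
    (n₁ n₂ : ℤ) (hv1 : t ^ n₁ < v) (hv2 : v < t ^ n₂) : 1 < v⁻¹ * x * v := by
  haveI : MulLeftMono G := mulLeftMono_of_mulLeftStrictMono G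
  by_contra h
  push_neg at h
  have hxv : x * v ≤ v := by
    have := mul_le_mul_right h v
    simpa [mul_assoc] using this
  have hk : ∀ k : ℕ, x ^ k * v ≤ v := by
    intro k
    induction k with
    | zero => simp
    | succ k ih =>
      calc x ^ (k + 1) * v = x * (x ^ k * v) := by rw [pow_succ']; rw [mul_assoc]
        _ ≤ x * v := mul_le_mul_right ih x
        _ ≤ v := hxv
  have hxk : ∀ k : ℕ, t ^ k ≤ x ^ k := by
    intro k
    induction k with
    | zero => simp
    | succ k ih =>
      calc t ^ (k + 1) = t * t ^ k := by rw [pow_succ']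
        _ ≤ t * x ^ k := mul_le_mul_right ih t
        _ = x ^ k * t := ((hxt.symm).pow_right k).symm ▸ rfl
        _ ≤ x ^ k * x := mul_le_mul_right hx.le (x ^ k)
        _ = x ^ (k + 1) := (pow_succ x k).symm
  set k : ℕ := (n₂ - n₁).toNat with hkdef
  have hcmp : t ^ (n₁ + (k : ℤ)) < t ^ n₂ := by
    calc t ^ (n₁ + (k : ℤ)) = t ^ n₁ * t ^ (k : ℤ) := zpow_add t n₁ k
      _ = t ^ n₁ * t ^ k := by rw [zpow_natCast]
      _ ≤ t ^ n₁ * x ^ k := mul_le_mul_right (hxk k) _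
      _ = x ^ k * t ^ n₁ := (Commute.zpow_left (hxt.pow_left k).symm n₁).symm ▸ rfl
      _ < x ^ k * v := mul_lt_mul_right hv1 _
      _ ≤ v := hk k
      _ < t ^ n₂ := hv2
  have hle : n₂ ≤ n₁ + (k : ℤ) := by omega
  have h1 : t ^ n₂ ≤ t ^ (n₁ + (k : ℤ)) := by
    have hd : (1:G) ≤ t ^ (n₁ + (k:ℤ) - n₂) := one_le_zpow ht.le (by omega)
    calc t ^ n₂ = t ^ n₂ * 1 := (mul_one _).symm
      _ ≤ t ^ n₂ * t ^ (n₁ + (k:ℤ) - n₂) := mul_le_mul_right hd _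
      _ = t ^ (n₁ + (k:ℤ)) := by rw [← zpow_add]; ring_nf
  exact absurd hcmp (not_lt.mpr h1)

theorem stmt_3 {G : Type*} [Group G] [LinearOrder G]
    [CovariantClass G G (· * ·) (· < ·)]
    (u v t : G) (hut : u * t = t * u) (hvt : v * t = t * v) (m n₁ n₂ : ℤ)
    (hu1 : t ^ (m - 1) < u) (hu2 : u < t ^ m)
    (hv1 : t ^ n₁ < v) (hv2 : v < t ^ n₂) :
    t ^ (m - 2) < v⁻¹ * u * v ∧ v⁻¹ * u * v < t ^ (m + 1) := by
  haveI : MulLeftMono G := mulLeftMono_of_mulLeftStrictMono G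
  have hcut : Commute u t := hut
  have hcvt : Commute v t := hvt
  have hvz : ∀ n : ℤ, v⁻¹ * t ^ n = t ^ n * v⁻¹ := fun n => ((hcvt.zpow_right n).inv_left).eq
  -- 1 < t
  have ht : 1 < t := by
    have h12 : t ^ (m - 1) < t ^ m := hu1.trans hu2
    have h13 : t ^ (m - 1) * 1 < t ^ (m - 1) * t := by
      rw [mul_one]
      calc t ^ (m - 1) < t ^ m := h12
        _ = t ^ (m - 1 + 1) := by ring_nf
        _ = t ^ (m - 1) * t := by rw [zpow_add_one]
    exact lt_of_mul_lt_mul_left' h13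
  constructor
  · -- lower bound
    set x : G := t ^ (2 - m) * u with hxdef
    have hx : t < x := by
      have := mul_lt_mul_right hu1 (t ^ (2 - m))
      calc t = t ^ (2 - m) * t ^ (m - 1) := by rw [← zpow_add]; norm_num
        _ < t ^ (2 - m) * u := this
    have hxt : Commute x t := (((Commute.refl t).zpow_left (2 - m)).mul_left hcut)
    have h1 := key_conj t x v ht hx hxt hcvt n₁ n₂ hv1 hv2
    have heq : v⁻¹ * u * v = t ^ (m - 2) * (v⁻¹ * x * v) := by
      have hu : u = t ^ (m - 2) * x := by
        rw [hxdef, ← mul_assoc, ← zpow_add]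
        norm_num
      calc v⁻¹ * u * v = v⁻¹ * (t ^ (m - 2) * x) * v := by rw [← hu]
        _ = (v⁻¹ * t ^ (m - 2)) * (x * v) := by group
        _ = (t ^ (m - 2) * v⁻¹) * (x * v) := by rw [hvz]
        _ = t ^ (m - 2) * (v⁻¹ * x * v) := by rw [mul_assoc, ← mul_assoc v⁻¹]
    rw [heq]
    calc t ^ (m - 2) = t ^ (m - 2) * 1 := (mul_one _).symm
      _ < t ^ (m - 2) * (v⁻¹ * x * v) := mul_lt_mul_right h1 _
  · -- upper bound
    set y : G := u⁻¹ * t ^ (m + 1) with hydef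
    have hy : t < y := by
      have h0 : (1 : G) < u⁻¹ * t ^ m := by
        have := mul_lt_mul_right hu2 u⁻¹
        simpa using this
      have := mul_lt_mul_right h0 t
      calc t = t * 1 := (mul_one _).symm
        _ < t * (u⁻¹ * t ^ m) := this
        _ = (t * u⁻¹) * t ^ m := by rw [mul_assoc]
        _ = (u⁻¹ * t) * t ^ m := by rw [hcut.inv_left.eq]
        _ = u⁻¹ * (t * t ^ m) := by rw [mul_assoc]
        _ = u⁻¹ * t ^ (m + 1) := by rw [← zpow_one_add]; ring_nf
    have hyt : Commute y t := hcut.inv_left.mul_left ((Commute.refl t).zpow_left (m + 1))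
    have h1 := key_conj t y v ht hy hyt hcvt n₁ n₂ hv1 hv2
    have heq : (v⁻¹ * u * v) * (v⁻¹ * y * v) = t ^ (m + 1) := by
      calc (v⁻¹ * u * v) * (v⁻¹ * y * v) = v⁻¹ * (u * (u⁻¹ * t ^ (m + 1))) * v := by
            rw [hydef]; group
        _ = v⁻¹ * t ^ (m + 1) * v := by rw [← mul_assoc u, mul_inv_cancel, one_mul]
        _ = t ^ (m + 1) * (v⁻¹ * v) := by rw [hvz, mul_assoc]
        _ = t ^ (m + 1) := by rw [inv_mul_cancel, mul_one]
    calc v⁻¹ * u * v = (v⁻¹ * u * v) * 1 := (mul_one _).symm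
      _ < (v⁻¹ * u * v) * (v⁻¹ * y * v) := mul_lt_mul_right h1 _
      _ = t ^ (m + 1) := heq
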